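/- Consequences of maximal violation (two-party): Let A₀, A₁ be Hermitian n×n matrices and B₀, B₁ Hermitian m×m matrices with A₀² ⪯ Iₙ, A₁² ⪯ Iₙ, B₀² ⪯ Iₘ, B₁² ⪯ Iₘ, let a, b ∈ {0,1}, and let ψ ∈ ℂⁿ ⊗ ℂᵐ be a unit vector with ⟨ψ| B̂_{a,b} |ψ⟩ = 2. Then: (1) ((−1)^a Ã₁ ⊗ Iₘ) ψ = (Iₙ ⊗ B₁) ψ; (2) ((−1)^{a+b} Ã₀ ⊗ Iₘ) ψ = (Iₙ ⊗ B₀) ψ; and (3) (A_i² ⊗ Iₘ) ψ = ψ and (Iₙ ⊗ B_i²) ψ = ψ for i = 0, 1 (so the observables act as unitaries on the state). -/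

import Mathlib

/-!
Consequences of maximal violation (two-party): if a unit vector `ψ` satisfies
`⟨ψ| B̂_{a,b} |ψ⟩ = 2`, then `((−1)^a Ã₁ ⊗ I) ψ = (I ⊗ B₁) ψ`,
`((−1)^{a+b} Ã₀ ⊗ I) ψ = (I ⊗ B₀) ψ`, and `(A_i² ⊗ I) ψ = ψ`, `(I ⊗ B_i²) ψ = ψ`.
-/

open Matrix Finset
open scoped Matrix Kronecker ComplexOrder

noncomputable section

/-- `tildeA A 0 = (A₀ - A₁)/√2` and `tildeA A 1 = (A₀ + A₁)/√2`. -/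
def tildeA {n : Type*} (A : Fin 2 → Matrix n n ℂ) (j : Fin 2) : Matrix n n ℂ :=
  (Real.sqrt 2 : ℂ)⁻¹ • (A 0 + (-1 : ℂ) ^ ((j : ℕ) + 1) • A 1)

/-- The Bell operator `B̂_{a,b} = (−1)^a (Ã₁ ⊗ B₁ + (−1)^b Ã₀ ⊗ B₀)`. -/
def BellOp {n m : Type*} (A : Fin 2 → Matrix n n ℂ) (B : Fin 2 → Matrix m m ℂ)
    (a b : Fin 2) : Matrix (n × m) (n × m) ℂ :=
  (-1 : ℂ) ^ (a : ℕ) • (tildeA A 1 ⊗ₖ B 1 + (-1 : ℂ) ^ (b : ℕ) • (tildeA A 0 ⊗ₖ B 0))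

lemma mv_kron_conjT {l p : Type*} (M : Matrix l l ℂ) (N : Matrix p p ℂ) :
    (M ⊗ₖ N)ᴴ = Mᴴ ⊗ₖ Nᴴ := by
  ext ⟨i, j⟩ ⟨k, l'⟩
  simp [Matrix.conjTranspose_apply, Matrix.kroneckerMap_apply, mul_comm]

lemma mv_sub_kron {l p : Type*} (M M' : Matrix l l ℂ) (N : Matrix p p ℂ) :
    (M - M') ⊗ₖ N = M ⊗ₖ N - M' ⊗ₖ N := by
  ext ⟨i, j⟩ ⟨k, l'⟩
  simp [Matrix.kroneckerMap_apply, sub_mul]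

lemma mv_kron_sub {l p : Type*} (M : Matrix l l ℂ) (N N' : Matrix p p ℂ) :
    M ⊗ₖ (N - N') = M ⊗ₖ N - M ⊗ₖ N' := by
  ext ⟨i, j⟩ ⟨k, l'⟩
  simp [Matrix.kroneckerMap_apply, mul_sub]

lemma mv_psd_kron_one {l p : Type*} [Fintype l] [Fintype p] [DecidableEq l] [DecidableEq p]
    {M : Matrix l l ℂ} (hM : M.PosSemidef) :
    (M ⊗ₖ (1 : Matrix p p ℂ)).PosSemidef := by
  obtain ⟨C, rfl⟩ : ∃ C : Matrix l l ℂ, M = Cᴴ * C := by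
    open scoped MatrixOrder in exact CStarAlgebra.nonneg_iff_eq_star_mul_self.mp hM.nonneg
  have h : (Cᴴ * C) ⊗ₖ (1 : Matrix p p ℂ) = (C ⊗ₖ (1 : Matrix p p ℂ))ᴴ * (C ⊗ₖ 1) := by
    rw [mv_kron_conjT, Matrix.conjTranspose_one, ← Matrix.mul_kronecker_mul, one_mul]
  rw [h]
  exact Matrix.posSemidef_conjTranspose_mul_self _

lemma mv_psd_one_kron {l p : Type*} [Fintype l] [Fintype p] [DecidableEq l] [DecidableEq p]
    {N : Matrix p p ℂ} (hN : N.PosSemidef) :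
    ((1 : Matrix l l ℂ) ⊗ₖ N).PosSemidef := by
  obtain ⟨C, rfl⟩ : ∃ C : Matrix p p ℂ, N = Cᴴ * C := by
    open scoped MatrixOrder in exact CStarAlgebra.nonneg_iff_eq_star_mul_self.mp hN.nonneg
  have h : (1 : Matrix l l ℂ) ⊗ₖ (Cᴴ * C) = ((1 : Matrix l l ℂ) ⊗ₖ C)ᴴ * (1 ⊗ₖ C) := by
    rw [mv_kron_conjT, Matrix.conjTranspose_one, ← Matrix.mul_kronecker_mul, one_mul]
  rw [h]
  exact Matrix.posSemidef_conjTranspose_mul_self _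

lemma mv_herm_sq_apply_zero {k : Type*} [Fintype k] [DecidableEq k] {H : Matrix k k ℂ} (hH : H.IsHermitian)
    {x : k → ℂ} (h : star x ⬝ᵥ (H ^ 2) *ᵥ x = 0) : H *ᵥ x = 0 := by
  have h0 : star (H *ᵥ x) ⬝ᵥ (H *ᵥ x) = 0 := by
    rw [Matrix.star_mulVec, hH.eq, ← Matrix.dotProduct_mulVec, Matrix.mulVec_mulVec,
      ← pow_two]
    exact h
  exact dotProduct_star_self_eq_zero.mp h0

lemma mv_six_zero {x1 x2 x3 x4 x5 x6 : ℂ} (h1 : 0 ≤ x1) (h2 : 0 ≤ x2) (h3 : 0 ≤ x3)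
    (h4 : 0 ≤ x4) (h5 : 0 ≤ x5) (h6 : 0 ≤ x6)
    (h : x1 + x2 + x3 + x4 + x5 + x6 = 0) :
    x1 = 0 ∧ x2 = 0 ∧ x3 = 0 ∧ x4 = 0 ∧ x5 = 0 ∧ x6 = 0 := by
  have p12 : 0 ≤ x1 + x2 := add_nonneg h1 h2
  have p123 : 0 ≤ x1 + x2 + x3 := add_nonneg p12 h3
  have p1234 : 0 ≤ x1 + x2 + x3 + x4 := add_nonneg p123 h4
  have p12345 : 0 ≤ x1 + x2 + x3 + x4 + x5 := add_nonneg p1234 h5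
  obtain ⟨ha, hb6⟩ := (add_eq_zero_iff_of_nonneg p12345 h6).mp h
  obtain ⟨ha, hb5⟩ := (add_eq_zero_iff_of_nonneg p1234 h5).mp ha
  obtain ⟨ha, hb4⟩ := (add_eq_zero_iff_of_nonneg p123 h4).mp ha
  obtain ⟨ha, hb3⟩ := (add_eq_zero_iff_of_nonneg p12 h3).mp ha
  obtain ⟨hb1, hb2⟩ := (add_eq_zero_iff_of_nonneg h1 h2).mp ha
  exact ⟨hb1, hb2, hb3, hb4, hb5, hb6⟩

theorem maximal_violation_consequences_two_party (n m : ℕ)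
    (A : Fin 2 → Matrix (Fin n) (Fin n) ℂ) (B : Fin 2 → Matrix (Fin m) (Fin m) ℂ)
    (hAh : ∀ x, (A x).IsHermitian) (hBh : ∀ x, (B x).IsHermitian)
    (hA1 : ∀ x, ((1 : Matrix (Fin n) (Fin n) ℂ) - A x ^ 2).PosSemidef)
    (hB1 : ∀ x, ((1 : Matrix (Fin m) (Fin m) ℂ) - B x ^ 2).PosSemidef)
    (a b : Fin 2) (ψ : Fin n × Fin m → ℂ)
    (hψ : star ψ ⬝ᵥ ψ = 1)
    (hmax : star ψ ⬝ᵥ (BellOp A B a b) *ᵥ ψ = 2) :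
    (((-1 : ℂ) ^ (a : ℕ) • (tildeA A 1 ⊗ₖ (1 : Matrix (Fin m) (Fin m) ℂ))) *ᵥ ψ
        = ((1 : Matrix (Fin n) (Fin n) ℂ) ⊗ₖ B 1) *ᵥ ψ) ∧
    (((-1 : ℂ) ^ ((a : ℕ) + (b : ℕ)) • (tildeA A 0 ⊗ₖ (1 : Matrix (Fin m) (Fin m) ℂ))) *ᵥ ψ
        = ((1 : Matrix (Fin n) (Fin n) ℂ) ⊗ₖ B 0) *ᵥ ψ) ∧
    (∀ i : Fin 2, ((A i ^ 2) ⊗ₖ (1 : Matrix (Fin m) (Fin m) ℂ)) *ᵥ ψ = ψ) ∧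
    (∀ i : Fin 2, ((1 : Matrix (Fin n) (Fin n) ℂ) ⊗ₖ (B i ^ 2)) *ᵥ ψ = ψ) := by
  classical
  set s1 : ℂ := (-1 : ℂ) ^ (a : ℕ) with hs1_def
  set s0 : ℂ := (-1 : ℂ) ^ ((a : ℕ) + (b : ℕ)) with hs0_def
  set u := tildeA A 1 ⊗ₖ (1 : Matrix (Fin m) (Fin m) ℂ) with hu_def
  set v := (1 : Matrix (Fin n) (Fin n) ℂ) ⊗ₖ B 1 with hv_def
  set w := tildeA A 0 ⊗ₖ (1 : Matrix (Fin m) (Fin m) ℂ) with hw_def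
  set z := (1 : Matrix (Fin n) (Fin n) ℂ) ⊗ₖ B 0 with hz_def
  clear_value s1 s0 u v w z
  have hs1 : s1 * s1 = 1 := by rw [hs1_def, ← mul_pow]; norm_num
  have hs0 : s0 * s0 = 1 := by rw [hs0_def, ← mul_pow]; norm_num
  have hstar_s1 : star s1 = s1 := by rw [hs1_def]; simp
  have hstar_s0 : star s0 = s0 := by rw [hs0_def]; simp
  -- Hermiticity of the tilde matrices
  have htA : ∀ j, (tildeA A j).IsHermitian := by
    intro j
    have h0 := (hAh 0).eq
    have h1 := (hAh 1).eq
    unfold Matrix.IsHermitian tildeA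
    simp [Matrix.conjTranspose_smul, Matrix.conjTranspose_add, h0, h1]
  have huh : uᴴ = u := by rw [hu_def, mv_kron_conjT, Matrix.conjTranspose_one, (htA 1).eq]
  have hvh : vᴴ = v := by rw [hv_def, mv_kron_conjT, Matrix.conjTranspose_one, (hBh 1).eq]
  have hwh : wᴴ = w := by rw [hw_def, mv_kron_conjT, Matrix.conjTranspose_one, (htA 0).eq]
  have hzh : zᴴ = z := by rw [hz_def, mv_kron_conjT, Matrix.conjTranspose_one, (hBh 0).eq]
  have hP1h : (s1 • u - v).IsHermitian := by
    unfold Matrix.IsHermitian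
    rw [Matrix.conjTranspose_sub, Matrix.conjTranspose_smul, hstar_s1, huh, hvh]
  have hP0h : (s0 • w - z).IsHermitian := by
    unfold Matrix.IsHermitian
    rw [Matrix.conjTranspose_sub, Matrix.conjTranspose_smul, hstar_s0, hwh, hzh]
  -- positive semidefiniteness of the six summands
  have psdP1 : ((s1 • u - v) ^ 2).PosSemidef := by
    rw [pow_two]
    nth_rewrite 1 [← hP1h]
    exact Matrix.posSemidef_conjTranspose_mul_self _
  have psdP0 : ((s0 • w - z) ^ 2).PosSemidef := by
    rw [pow_two]
    nth_rewrite 1 [← hP0h]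
    exact Matrix.posSemidef_conjTranspose_mul_self _
  have psdQ : ∀ i : Fin 2,
      (((1 : Matrix (Fin n) (Fin n) ℂ) - A i ^ 2) ⊗ₖ (1 : Matrix (Fin m) (Fin m) ℂ)).PosSemidef :=
    fun i => mv_psd_kron_one (hA1 i)
  have psdR : ∀ i : Fin 2,
      ((1 : Matrix (Fin n) (Fin n) ℂ) ⊗ₖ ((1 : Matrix (Fin m) (Fin m) ℂ) - B i ^ 2)).PosSemidef :=
    fun i => mv_psd_one_kron (hB1 i)
  -- products
  have huv : u * v = tildeA A 1 ⊗ₖ B 1 := by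
    rw [hu_def, hv_def, ← Matrix.mul_kronecker_mul, mul_one, one_mul]
  have hvu : v * u = tildeA A 1 ⊗ₖ B 1 := by
    rw [hu_def, hv_def, ← Matrix.mul_kronecker_mul, mul_one, one_mul]
  have hwz : w * z = tildeA A 0 ⊗ₖ B 0 := by
    rw [hw_def, hz_def, ← Matrix.mul_kronecker_mul, mul_one, one_mul]
  have hzw : z * w = tildeA A 0 ⊗ₖ B 0 := by
    rw [hw_def, hz_def, ← Matrix.mul_kronecker_mul, mul_one, one_mul]
  have huu : u * u = (tildeA A 1 ^ 2) ⊗ₖ (1 : Matrix (Fin m) (Fin m) ℂ) := by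
    rw [hu_def, ← Matrix.mul_kronecker_mul, mul_one, ← pow_two]
  have hww : w * w = (tildeA A 0 ^ 2) ⊗ₖ (1 : Matrix (Fin m) (Fin m) ℂ) := by
    rw [hw_def, ← Matrix.mul_kronecker_mul, mul_one, ← pow_two]
  have hvv : v * v = (1 : Matrix (Fin n) (Fin n) ℂ) ⊗ₖ (B 1 ^ 2) := by
    rw [hv_def, ← Matrix.mul_kronecker_mul, mul_one, ← pow_two]
  have hzz : z * z = (1 : Matrix (Fin n) (Fin n) ℂ) ⊗ₖ (B 0 ^ 2) := by
    rw [hz_def, ← Matrix.mul_kronecker_mul, mul_one, ← pow_two]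
  -- sum of squares of the tilde matrices
  have hc2 : (Real.sqrt 2 : ℂ)⁻¹ ^ 2 = 2⁻¹ := by
    rw [pow_two, ← mul_inv, ← Complex.ofReal_mul, Real.mul_self_sqrt (by norm_num)]
    norm_num
  have e0 : tildeA A 0 = (Real.sqrt 2 : ℂ)⁻¹ • (A 0 - A 1) := by
    simp [tildeA, sub_eq_add_neg]
  have e1 : tildeA A 1 = (Real.sqrt 2 : ℂ)⁻¹ • (A 0 + A 1) := by
    simp [tildeA]
  have hsq : tildeA A 0 ^ 2 + tildeA A 1 ^ 2 = A 0 ^ 2 + A 1 ^ 2 := by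
    have expand : (A 0 - A 1) ^ 2 + (A 0 + A 1) ^ 2 = (2 : ℂ) • (A 0 ^ 2 + A 1 ^ 2) := by
      rw [two_smul]
      noncomm_ring
    calc tildeA A 0 ^ 2 + tildeA A 1 ^ 2
        = (2⁻¹ : ℂ) • ((A 0 - A 1) ^ 2 + (A 0 + A 1) ^ 2) := by
          rw [e0, e1, smul_pow, smul_pow, hc2, smul_add]
      _ = (2⁻¹ : ℂ) • ((2 : ℂ) • (A 0 ^ 2 + A 1 ^ 2)) := by rw [expand]
      _ = A 0 ^ 2 + A 1 ^ 2 := by rw [smul_smul]; norm_num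
  have hsqK : (tildeA A 0 ^ 2) ⊗ₖ (1 : Matrix (Fin m) (Fin m) ℂ)
        + (tildeA A 1 ^ 2) ⊗ₖ (1 : Matrix (Fin m) (Fin m) ℂ)
      = (A 0 ^ 2) ⊗ₖ (1 : Matrix (Fin m) (Fin m) ℂ)
        + (A 1 ^ 2) ⊗ₖ (1 : Matrix (Fin m) (Fin m) ℂ) := by
    rw [← Matrix.add_kronecker, ← Matrix.add_kronecker, hsq]
  -- Bell operator in terms of the scalars
  have hBell : BellOp A B a b
      = s1 • (tildeA A 1 ⊗ₖ B 1) + s0 • (tildeA A 0 ⊗ₖ B 0) := by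
    rw [hs1_def, hs0_def]
    unfold BellOp
    rw [smul_add, smul_smul, ← pow_add]
  -- key sum-of-squares identity
  have key : (s1 • u - v) ^ 2 + (s0 • w - z) ^ 2
      + ((1 : Matrix (Fin n) (Fin n) ℂ) - A 0 ^ 2) ⊗ₖ (1 : Matrix (Fin m) (Fin m) ℂ)
      + ((1 : Matrix (Fin n) (Fin n) ℂ) - A 1 ^ 2) ⊗ₖ (1 : Matrix (Fin m) (Fin m) ℂ)
      + (1 : Matrix (Fin n) (Fin n) ℂ) ⊗ₖ ((1 : Matrix (Fin m) (Fin m) ℂ) - B 0 ^ 2)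
      + (1 : Matrix (Fin n) (Fin n) ℂ) ⊗ₖ ((1 : Matrix (Fin m) (Fin m) ℂ) - B 1 ^ 2)
      = (4 : ℂ) • (1 : Matrix (Fin n × Fin m) (Fin n × Fin m) ℂ)
        - (2 : ℂ) • BellOp A B a b := by
    have sq1 : (s1 • u - v) ^ 2
        = u * u + v * v - (2 : ℂ) • (s1 • (tildeA A 1 ⊗ₖ B 1)) := by
      simp only [pow_two, sub_mul, mul_sub, smul_mul_assoc, mul_smul_comm, smul_smul,
        hs1, one_smul, huv, hvu]
      match_scalars <;> first | ring1 | linear_combination hs1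
    have sq0 : (s0 • w - z) ^ 2
        = w * w + z * z - (2 : ℂ) • (s0 • (tildeA A 0 ⊗ₖ B 0)) := by
      simp only [pow_two, sub_mul, mul_sub, smul_mul_assoc, mul_smul_comm, smul_smul,
        hs0, one_smul, hwz, hzw]
      match_scalars <;> first | ring1 | linear_combination hs0
    rw [sq1, sq0, huu, hvv, hww, hzz, hBell, mv_sub_kron, mv_sub_kron, mv_kron_sub,
      mv_kron_sub, Matrix.one_kronecker_one]
    linear_combination (norm := module) hsqK
  -- evaluate the quadratic form at ψ
  have hval : star ψ ⬝ᵥ ((s1 • u - v) ^ 2 + (s0 • w - z) ^ 2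
      + ((1 : Matrix (Fin n) (Fin n) ℂ) - A 0 ^ 2) ⊗ₖ (1 : Matrix (Fin m) (Fin m) ℂ)
      + ((1 : Matrix (Fin n) (Fin n) ℂ) - A 1 ^ 2) ⊗ₖ (1 : Matrix (Fin m) (Fin m) ℂ)
      + (1 : Matrix (Fin n) (Fin n) ℂ) ⊗ₖ ((1 : Matrix (Fin m) (Fin m) ℂ) - B 0 ^ 2)
      + (1 : Matrix (Fin n) (Fin n) ℂ) ⊗ₖ ((1 : Matrix (Fin m) (Fin m) ℂ) - B 1 ^ 2)) *ᵥ ψ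
      = 0 := by
    rw [key, Matrix.sub_mulVec, Matrix.smul_mulVec, Matrix.smul_mulVec,
      Matrix.one_mulVec, dotProduct_sub, dotProduct_smul, dotProduct_smul, hψ, hmax]
    norm_num
  have hsplit : star ψ ⬝ᵥ ((s1 • u - v) ^ 2) *ᵥ ψ
      + star ψ ⬝ᵥ ((s0 • w - z) ^ 2) *ᵥ ψ
      + star ψ ⬝ᵥ (((1 : Matrix (Fin n) (Fin n) ℂ) - A 0 ^ 2) ⊗ₖ (1 : Matrix (Fin m) (Fin m) ℂ)) *ᵥ ψ
      + star ψ ⬝ᵥ (((1 : Matrix (Fin n) (Fin n) ℂ) - A 1 ^ 2) ⊗ₖ (1 : Matrix (Fin m) (Fin m) ℂ)) *ᵥ ψ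
      + star ψ ⬝ᵥ ((1 : Matrix (Fin n) (Fin n) ℂ) ⊗ₖ ((1 : Matrix (Fin m) (Fin m) ℂ) - B 0 ^ 2)) *ᵥ ψ
      + star ψ ⬝ᵥ ((1 : Matrix (Fin n) (Fin n) ℂ) ⊗ₖ ((1 : Matrix (Fin m) (Fin m) ℂ) - B 1 ^ 2)) *ᵥ ψ
      = 0 := by
    rw [← hval]
    simp [Matrix.add_mulVec, dotProduct_add]
  obtain ⟨z1, z2, z3, z4, z5, z6⟩ := mv_six_zero (psdP1.dotProduct_mulVec_nonneg ψ) (psdP0.dotProduct_mulVec_nonneg ψ)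
    ((psdQ 0).dotProduct_mulVec_nonneg ψ) ((psdQ 1).dotProduct_mulVec_nonneg ψ) ((psdR 0).dotProduct_mulVec_nonneg ψ) ((psdR 1).dotProduct_mulVec_nonneg ψ) hsplit
  have hH1 : (s1 • u - v) *ᵥ ψ = 0 := mv_herm_sq_apply_zero hP1h z1
  have hH0 : (s0 • w - z) *ᵥ ψ = 0 := mv_herm_sq_apply_zero hP0h z2
  have hQ0 := ((psdQ 0).dotProduct_mulVec_zero_iff ψ).mp z3
  have hQ1 := ((psdQ 1).dotProduct_mulVec_zero_iff ψ).mp z4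
  have hR0 := ((psdR 0).dotProduct_mulVec_zero_iff ψ).mp z5
  have hR1 := ((psdR 1).dotProduct_mulVec_zero_iff ψ).mp z6
  refine ⟨?_, ?_, ?_, ?_⟩
  · rw [Matrix.sub_mulVec] at hH1
    exact sub_eq_zero.mp hH1
  · rw [Matrix.sub_mulVec] at hH0
    exact sub_eq_zero.mp hH0
  · intro i
    fin_cases i
    · rw [mv_sub_kron, Matrix.one_kronecker_one, Matrix.sub_mulVec, Matrix.one_mulVec,
        sub_eq_zero] at hQ0
      exact hQ0.symm
    · rw [mv_sub_kron, Matrix.one_kronecker_one, Matrix.sub_mulVec, Matrix.one_mulVec,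
        sub_eq_zero] at hQ1
      exact hQ1.symm
  · intro i
    fin_cases i
    · rw [mv_kron_sub, Matrix.one_kronecker_one, Matrix.sub_mulVec, Matrix.one_mulVec,
        sub_eq_zero] at hR0
      exact hR0.symm
    · rw [mv_kron_sub, Matrix.one_kronecker_one, Matrix.sub_mulVec, Matrix.one_mulVec,
        sub_eq_zero] at hR1
      exact hR1.symm

end
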